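/- arXiv:2207.06251 — 2 statements merged into one kernel-verified Lean document; each statement's English description precedes it below -/
import Mathlib

section
/- Let K_{3,3,1} have parts {v}, {a,b,c}, {x,y,z}. If the edges (a,x) and (b,x) are removed but every edge from v to {a,b,c} is retained, and edge (v,x) is retained as well as (v,a), then the resulting graph has a K_{3,3} minor (obtained by contracting the edge (v,a)), hence is nonplanar. -/
open SimpleGraph

/-- `H` is a minor of `G`: disjoint connected branch sets in `G`, one for each vertex of `H`,
with edges of `H` realized by edges of `G` between the corresponding branch sets. -/
def MinorOf {W V : Type*} (H : SimpleGraph W) (G : SimpleGraph V) : Prop :=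
  ∃ f : W → Set V,
    (∀ w, (G.induce (f w)).Connected) ∧
    (Pairwise fun w w' => Disjoint (f w) (f w')) ∧
    (∀ w w', H.Adj w w' → ∃ a ∈ f w, ∃ b ∈ f w', G.Adj a b)

/-- Planarity, via Wagner's theorem: no `K₅` minor and no `K₃,₃` minor. -/
def IsPlanar {V : Type*} (G : SimpleGraph V) : Prop :=
  ¬ MinorOf (completeGraph (Fin 5)) G ∧
  ¬ MinorOf (completeBipartiteGraph (Fin 3) (Fin 3)) G

/-- `M` is a maximal planar subgraph of `G`: `M` is planar, and inserting any edge of `G`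
not in `M` into `M` yields a nonplanar graph. -/
def MaximalPlanarSubgraph {V : Type*} (G : SimpleGraph V) (M : G.Subgraph) : Prop :=
  IsPlanar M.coe ∧
  ∀ ⦃u v : V⦄ (h : G.Adj u v), ¬ M.Adj u v →
    ¬ IsPlanar (M ⊔ G.subgraphOfAdj h).coe

/-- `G` contains a copy of `H` as a subgraph. -/
def ContainsSubgraph {W V : Type*} (H : SimpleGraph W) (G : SimpleGraph V) : Prop :=
  ∃ f : W → V, Function.Injective f ∧ ∀ a b, H.Adj a b → G.Adj (f a) (f b)

/-- Partition function for `K_{3,3,1}`: vertex 0 is the singleton part,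
vertices 1,2,3 and 4,5,6 are the two parts of size 3. -/
def tpart : Fin 7 → Fin 3 := ![0, 1, 1, 1, 2, 2, 2]

/-- The complete tripartite graph `K_{3,3,1}` on parts {0}, {1,2,3}, {4,5,6}. -/
def K331 : SimpleGraph (Fin 7) where
  Adj i j := tpart i ≠ tpart j
  symm := ⟨fun _ _ h => Ne.symm h⟩
  loopless := ⟨fun _ h => h rfl⟩



instance : DecidableRel K331.Adj := fun i j => inferInstanceAs (Decidable (tpart i ≠ tpart j))

lemma connected_induce_singleton {V : Type*} (G : SimpleGraph V) (v : V) :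
    (G.induce {v}).Connected := by
  constructor
  intro a b
  have : a = b := Subtype.ext (by
    have ha := a.2; have hb := b.2
    simp only [Set.mem_singleton_iff] at ha hb
    rw [ha, hb])
  rw [this]

lemma connected_induce_pair {V : Type*} (G : SimpleGraph V) {u v : V} (h : G.Adj u v) :
    (G.induce {u, v}).Connected := by
  constructor
  intro a b
  have key : ∀ c : ({u, v} : Set V), (G.induce {u, v}).Reachable ⟨u, by simp⟩ c := by
    intro c
    have hc := c.2
    simp only [Set.mem_insert_iff, Set.mem_singleton_iff] at hc
    rcases hc with hc | hc
    · have : c = ⟨u, by simp⟩ := Subtype.ext hc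
      rw [this]
    · have : c = ⟨v, by simp⟩ := Subtype.ext hc
      rw [this]
      exact Adj.reachable (by simpa [SimpleGraph.comap] using h)
  exact (key a).symm.trans (key b)


lemma K33_minor :
    MinorOf (completeBipartiteGraph (Fin 3) (Fin 3))
      (K331.deleteEdges {s((1 : Fin 7), 4), s(2, 4)}) := by
  set Gd := K331.deleteEdges {s((1 : Fin 7), 4), s(2, 4)} with hGd
  have hadj : ∀ i j : Fin 7, K331.Adj i j → s(i, j) ≠ s((1:Fin 7), 4) → s(i, j) ≠ s((2:Fin 7), 4) →
      Gd.Adj i j := by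
    intro i j h1 h2 h3
    rw [hGd, SimpleGraph.deleteEdges_adj]
    exact ⟨h1, by simp [Set.mem_insert_iff, Set.mem_singleton_iff, h2, h3]⟩
  refine ⟨fun w => match w with
    | Sum.inl 0 => {0, 4}
    | Sum.inl 1 => {5}
    | Sum.inl 2 => {6}
    | Sum.inr 0 => {1}
    | Sum.inr 1 => {2}
    | Sum.inr 2 => {3}, ?_, ?_, ?_⟩
  · rintro (⟨w, hw⟩ | ⟨w, hw⟩)
    · interval_cases w
      · exact connected_induce_pair Gd (hadj 0 4 (by decide) (by decide) (by decide))
      · exact connected_induce_singleton Gd 5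
      · exact connected_induce_singleton Gd 6
    · interval_cases w
      · exact connected_induce_singleton Gd 1
      · exact connected_induce_singleton Gd 2
      · exact connected_induce_singleton Gd 3
  · rintro (⟨w, hw⟩ | ⟨w, hw⟩) (⟨w', hw'⟩ | ⟨w', hw'⟩) hne <;>
      interval_cases w <;> interval_cases w' <;>
        first
          | exact absurd rfl hne
          | simp [Set.disjoint_left]
  · rintro (⟨w, hw⟩ | ⟨w, hw⟩) (⟨w', hw'⟩ | ⟨w', hw'⟩) hadj'
    · exact absurd hadj' (by simp)
    · interval_cases w <;> interval_cases w'
      · exact ⟨0, by simp, 1, rfl, hadj 0 1 (by decide) (by decide) (by decide)⟩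
      · exact ⟨0, by simp, 2, rfl, hadj 0 2 (by decide) (by decide) (by decide)⟩
      · exact ⟨0, by simp, 3, rfl, hadj 0 3 (by decide) (by decide) (by decide)⟩
      · exact ⟨5, rfl, 1, rfl, hadj 5 1 (by decide) (by decide) (by decide)⟩
      · exact ⟨5, rfl, 2, rfl, hadj 5 2 (by decide) (by decide) (by decide)⟩
      · exact ⟨5, rfl, 3, rfl, hadj 5 3 (by decide) (by decide) (by decide)⟩
      · exact ⟨6, rfl, 1, rfl, hadj 6 1 (by decide) (by decide) (by decide)⟩
      · exact ⟨6, rfl, 2, rfl, hadj 6 2 (by decide) (by decide) (by decide)⟩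
      · exact ⟨6, rfl, 3, rfl, hadj 6 3 (by decide) (by decide) (by decide)⟩
    · interval_cases w <;> interval_cases w'
      · exact ⟨1, rfl, 0, by simp, (hadj 0 1 (by decide) (by decide) (by decide)).symm⟩
      · exact ⟨1, rfl, 5, rfl, (hadj 5 1 (by decide) (by decide) (by decide)).symm⟩
      · exact ⟨1, rfl, 6, rfl, (hadj 6 1 (by decide) (by decide) (by decide)).symm⟩
      · exact ⟨2, rfl, 0, by simp, (hadj 0 2 (by decide) (by decide) (by decide)).symm⟩
      · exact ⟨2, rfl, 5, rfl, (hadj 5 2 (by decide) (by decide) (by decide)).symm⟩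
      · exact ⟨2, rfl, 6, rfl, (hadj 6 2 (by decide) (by decide) (by decide)).symm⟩
      · exact ⟨3, rfl, 0, by simp, (hadj 0 3 (by decide) (by decide) (by decide)).symm⟩
      · exact ⟨3, rfl, 5, rfl, (hadj 5 3 (by decide) (by decide) (by decide)).symm⟩
      · exact ⟨3, rfl, 6, rfl, (hadj 6 3 (by decide) (by decide) (by decide)).symm⟩
    · exact absurd hadj' (by simp)

/-- In `K_{3,3,1}` with parts `{v} = {0}`, `{a,b,c} = {1,2,3}`, `{x,y,z} = {4,5,6}`:
removing the edges `(a,x)` and `(b,x)` (all edges at `v` being retained, in particular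
`(v,x)` and `(v,a)`) leaves a graph with a `K₃,₃` minor, hence nonplanar. -/
theorem K331_minus_two_edges_at_x_nonplanar :
    MinorOf (completeBipartiteGraph (Fin 3) (Fin 3))
      (K331.deleteEdges {s((1 : Fin 7), 4), s(2, 4)}) ∧
    ¬ IsPlanar (K331.deleteEdges {s((1 : Fin 7), 4), s(2, 4)}) := by
  exact ⟨K33_minor, fun h => h.2 K33_minor⟩
end

section
/- The complete tripartite graph K_{3,3,1} minus two nonadjacent edges between the parts {a,b,c} and {x,y,z} (e.g., minus (a,x) and (b,y)) is planar. -/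
open SimpleGraph

namespace K331Planar

abbrev GG : SimpleGraph (Fin 7) := K331.deleteEdges {s((1 : Fin 7), 4), s(2, 5)}

/-- Boolean adjacency of `GG` via a bitmask literal. -/
def adjB (a b : Fin 7) : Bool := Nat.testBit 66352382767358 (7*(a:Nat)+(b:Nat))

lemma adjB_iff' : ∀ a b : Fin 7,
    ((tpart a ≠ tpart b) ∧ ¬(s(a,b) = s((1:Fin 7),4) ∨ s(a,b) = s((2:Fin 7),5))) ↔
    adjB a b = true := by decide

lemma adjB_iff (a b : Fin 7) : GG.Adj a b ↔ adjB a b = true := by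
  rw [← adjB_iff' a b, SimpleGraph.deleteEdges_adj]
  simp only [Set.mem_insert_iff, Set.mem_singleton_iff]
  rfl

/-- encode a finset of vertices as a bitmask -/
def enc (s : Finset (Fin 7)) : Nat := s.sum fun v => 2^(v:Nat)

/-- connectivity-necessary-condition table: bit `m` is set iff the vertex set encoded by `m`
is nonempty and is a singleton or every member has a neighbor inside. -/
def ct (m : Nat) : Bool := 340173327340024424711577655492550044606 / 2^m % 2 == 1

/-- neighborhood-union table: `nbU m` is the bitmask of all vertices adjacent to some member
of the set encoded by `m`. -/
def nbU (m : Nat) : Nat := 528294531135665246352338910899845406826590430588261522113992702592880665333921134020634285276633151785714183174548915226877114397465807230926796525083809995732367649404718106888097647872292343777198353292604520879130469282726752780804255628020497493215866631882976820992 / 128^m % 128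

def pr (a b : Nat) : Bool := nbU a &&& b != 0

def nbhd (s : Finset (Fin 7)) : Finset (Fin 7) :=
  Finset.univ.filter fun b => ∃ a ∈ s, adjB a b = true

lemma enc_lt : ∀ s : Finset (Fin 7), enc s < 128 := by decide +kernel

lemma ct_of : ∀ s : Finset (Fin 7), s.Nonempty →
    (∀ v ∈ s, (∃ u ∈ s, u ≠ v) → ∃ u ∈ s, adjB v u = true) → ct (enc s) = true := by decide +kernel

lemma nbU_enc : ∀ s : Finset (Fin 7), nbU (enc s) = enc (nbhd s) := by decide +kernel

lemma tb_enc : ∀ (s : Finset (Fin 7)) (v : Fin 7), (enc s).testBit (v:Nat) = decide (v ∈ s) := by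
  decide +kernel

lemma bit_enc : ∀ (s : Finset (Fin 7)) (v : Fin 7),
    enc s / 2^(v:Nat) % 2 = if v ∈ s then 1 else 0 := by decide +kernel

lemma pr_of (s t : Finset (Fin 7)) {a b : Fin 7} (ha : a ∈ s) (hb : b ∈ t)
    (hab : adjB a b = true) : pr (enc s) (enc t) = true := by
  have h1 : (nbU (enc s)).testBit (b:Nat) = true := by
    rw [nbU_enc, tb_enc]
    exact decide_eq_true (Finset.mem_filter.mpr ⟨Finset.mem_univ _, a, ha, hab⟩)
  have h2 : (enc t).testBit (b:Nat) = true := by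
    rw [tb_enc]; exact decide_eq_true hb
  have h3 : ((nbU (enc s)) &&& enc t).testBit (b:Nat) = true := by
    rw [Nat.testBit_land, h1, h2]; rfl
  have h4 : (nbU (enc s)) &&& enc t ≠ 0 := by
    intro h0; rw [h0] at h3; simp [Nat.zero_testBit] at h3
  show ((nbU (enc s)) &&& enc t != 0) = true
  rwa [bne_iff_ne]

/-- masked prefix: the bits of `enc s` at positions `≥ t`. -/
def Mk (s : Finset (Fin 7)) (t : Nat) : Nat := enc s / 2^t * 2^t

lemma Mk7 (s : Finset (Fin 7)) : Mk s 7 = 0 := by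
  unfold Mk
  rw [Nat.div_eq_of_lt (show enc s < 2^7 by norm_num; exact enc_lt s)]
  simp

lemma Mk0 (s : Finset (Fin 7)) : Mk s 0 = enc s := by simp [Mk]

lemma maskStep' (s : Finset (Fin 7)) (v : Fin 7) (t : Nat) (hv : (v : Nat) = t)
    (b : Prop) [Decidable b] (hb : b ↔ v ∈ s) :
    Mk s (t+1) + (if b then 2^t else 0) = Mk s t := by
  subst hv
  have hbit := bit_enc s v
  have hx : enc s / 2 ^ ((v:Nat)+1) = enc s / 2^(v:Nat) / 2 := by
    rw [pow_succ, Nat.div_div_eq_div_mul]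
  have hite : (if b then 2^(v:Nat) else 0) = (enc s / 2^(v:Nat) % 2) * 2^(v:Nat) := by
    rw [hbit]
    by_cases h : v ∈ s <;> simp [h, hb]
  unfold Mk
  rw [hx, hite, pow_succ]
  calc enc s / 2^(v:Nat) / 2 * (2 ^ (v:Nat) * 2) + enc s / 2^(v:Nat) % 2 * 2 ^ (v:Nat)
      = (enc s / 2^(v:Nat) / 2 * 2 + enc s / 2^(v:Nat) % 2) * 2 ^ (v:Nat) := by ring
    _ = enc s / 2^(v:Nat) * 2 ^ (v:Nat) := by
        have hxx : enc s / 2 ^ (v:Nat) / 2 * 2 + enc s / 2 ^ (v:Nat) % 2 = enc s / 2^(v:Nat) := by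
          omega
        rw [hxx]

/-! ### K5 search -/

def chk5 (m1 m2 m3 m4 m5 : Nat) : Bool :=
  ct m1 && (ct m2 && (pr m1 m2 && (ct m3 && (pr m1 m3 && (pr m2 m3 &&
  (ct m4 && (pr m1 m4 && (pr m2 m4 && (pr m3 m4 &&
  (ct m5 && (pr m1 m5 && (pr m2 m5 && (pr m3 m5 && pr m4 m5)))))))))))))

def srch5 : Nat → Nat → Nat → Nat → Nat → Nat → Bool
  | 0, m1, m2, m3, m4, m5 => !(chk5 m1 m2 m3 m4 m5)
  | 1, m1, m2, m3, m4, m5 => srch5 0 m1 m2 m3 m4 m5 && srch5 0 (m1 + 2^0) m2 m3 m4 m5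
  | t+2, m1, m2, m3, m4, m5 =>
    srch5 (t+1) m1 m2 m3 m4 m5 &&
    (srch5 (t+1) (m1 + 2^(t+1)) m2 m3 m4 m5 &&
    (srch5 (t+1) m1 (m2 + 2^(t+1)) m3 m4 m5 &&
    (srch5 (t+1) m1 m2 (m3 + 2^(t+1)) m4 m5 &&
    (srch5 (t+1) m1 m2 m3 (m4 + 2^(t+1)) m5 &&
     srch5 (t+1) m1 m2 m3 m4 (m5 + 2^(t+1))))))

theorem big5 : srch5 7 0 0 0 0 0 = true := by decide +kernel

lemma step5 (t m1 m2 m3 m4 m5 : Nat) (h : srch5 (t+2) m1 m2 m3 m4 m5 = true)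
    (c : Option (Fin 5)) :
    srch5 (t+1) (m1 + if c = some 0 then 2^(t+1) else 0)
      (m2 + if c = some 1 then 2^(t+1) else 0)
      (m3 + if c = some 2 then 2^(t+1) else 0)
      (m4 + if c = some 3 then 2^(t+1) else 0)
      (m5 + if c = some 4 then 2^(t+1) else 0) = true := by
  simp only [srch5, Bool.and_eq_true] at h
  obtain ⟨h0, h1, h2, h3, h4, h5⟩ := h
  match c with
  | none => simpa using h0
  | some 0 => simpa using h1
  | some 1 => simpa using h2
  | some 2 => simpa using h3
  | some 3 => simpa using h4
  | some 4 => simpa using h5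

lemma step5b (m1 m2 m3 m4 m5 : Nat) (h : srch5 1 m1 m2 m3 m4 m5 = true)
    (c : Option (Fin 5)) (hc : c = none ∨ c = some 0) :
    srch5 0 (m1 + if c = some 0 then 2^0 else 0)
      (m2 + if c = some 1 then 2^0 else 0)
      (m3 + if c = some 2 then 2^0 else 0)
      (m4 + if c = some 3 then 2^0 else 0)
      (m5 + if c = some 4 then 2^0 else 0) = true := by
  simp only [srch5, Bool.and_eq_true] at h
  obtain ⟨h0, h1⟩ := h
  rcases hc with rfl | rfl
  · simpa [srch5] using h0
  · simpa [srch5] using h1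

/-! ### K33 search -/

def chk6 (m1 m2 m3 m4 m5 m6 : Nat) : Bool :=
  ct m1 && (ct m2 && (ct m3 && (ct m4 && (pr m1 m4 && (pr m2 m4 && (pr m3 m4 &&
  (ct m5 && (pr m1 m5 && (pr m2 m5 && (pr m3 m5 &&
  (ct m6 && (pr m1 m6 && (pr m2 m6 && pr m3 m6)))))))))))))

def srch6 : Nat → Nat → Nat → Nat → Nat → Nat → Nat → Bool
  | 0, m1, m2, m3, m4, m5, m6 => !(chk6 m1 m2 m3 m4 m5 m6)
  | 1, m1, m2, m3, m4, m5, m6 => srch6 0 m1 m2 m3 m4 m5 m6 && srch6 0 (m1 + 2^0) m2 m3 m4 m5 m6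
  | t+2, m1, m2, m3, m4, m5, m6 =>
    srch6 (t+1) m1 m2 m3 m4 m5 m6 &&
    (srch6 (t+1) (m1 + 2^(t+1)) m2 m3 m4 m5 m6 &&
    (srch6 (t+1) m1 (m2 + 2^(t+1)) m3 m4 m5 m6 &&
    (srch6 (t+1) m1 m2 (m3 + 2^(t+1)) m4 m5 m6 &&
    (srch6 (t+1) m1 m2 m3 (m4 + 2^(t+1)) m5 m6 &&
    (srch6 (t+1) m1 m2 m3 m4 (m5 + 2^(t+1)) m6 &&
     srch6 (t+1) m1 m2 m3 m4 m5 (m6 + 2^(t+1)))))))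

theorem big6 : srch6 7 0 0 0 0 0 0 = true := by decide +kernel

lemma step6 (t m1 m2 m3 m4 m5 m6 : Nat) (h : srch6 (t+2) m1 m2 m3 m4 m5 m6 = true)
    (c : Option (Fin 3 ⊕ Fin 3)) :
    srch6 (t+1) (m1 + if c = some (.inl 0) then 2^(t+1) else 0)
      (m2 + if c = some (.inl 1) then 2^(t+1) else 0)
      (m3 + if c = some (.inl 2) then 2^(t+1) else 0)
      (m4 + if c = some (.inr 0) then 2^(t+1) else 0)
      (m5 + if c = some (.inr 1) then 2^(t+1) else 0)
      (m6 + if c = some (.inr 2) then 2^(t+1) else 0) = true := by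
  simp only [srch6, Bool.and_eq_true] at h
  obtain ⟨h0, h1, h2, h3, h4, h5, h6⟩ := h
  match c with
  | none => simpa using h0
  | some (.inl 0) => simpa using h1
  | some (.inl 1) => simpa using h2
  | some (.inl 2) => simpa using h3
  | some (.inr 0) => simpa using h4
  | some (.inr 1) => simpa using h5
  | some (.inr 2) => simpa using h6

lemma step6b (m1 m2 m3 m4 m5 m6 : Nat) (h : srch6 1 m1 m2 m3 m4 m5 m6 = true)
    (c : Option (Fin 3 ⊕ Fin 3)) (hc : c = none ∨ c = some (.inl 0)) :
    srch6 0 (m1 + if c = some (.inl 0) then 2^0 else 0)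
      (m2 + if c = some (.inl 1) then 2^0 else 0)
      (m3 + if c = some (.inl 2) then 2^0 else 0)
      (m4 + if c = some (.inr 0) then 2^0 else 0)
      (m5 + if c = some (.inr 1) then 2^0 else 0)
      (m6 + if c = some (.inr 2) then 2^0 else 0) = true := by
  simp only [srch6, Bool.and_eq_true] at h
  obtain ⟨h0, h1⟩ := h
  rcases hc with rfl | rfl
  · simpa [srch6] using h0
  · simpa [srch6] using h1



section Bridge

lemma exists_label {W : Type*} (f : W → Set (Fin 7))
    (h2 : Pairwise fun w w' => Disjoint (f w) (f w')) :
    ∃ label : Fin 7 → Option W, ∀ v w, v ∈ f w ↔ label v = some w := by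
  classical
  refine ⟨fun v => if h : ∃ w, v ∈ f w then some h.choose else none, fun v w => ?_⟩
  constructor
  · intro hv
    have hex : ∃ w, v ∈ f w := ⟨w, hv⟩
    have hcw : hex.choose = w := by
      by_contra hne
      exact Set.disjoint_left.mp (h2 hne) hex.choose_spec hv
    simp only [dif_pos hex, hcw]
  · intro hl
    by_cases h : ∃ w', v ∈ f w'
    · simp only [dif_pos h] at hl
      injection hl with h'
      exact h' ▸ h.choose_spec
    · simp only [dif_neg h] at hl
      exact absurd hl (by simp)

theorem noK5 : ¬ MinorOf (completeGraph (Fin 5)) GG := by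
  intro hm
  obtain ⟨f, h1, h2, h3, hnorm⟩ :
      ∃ f : Fin 5 → Set (Fin 7),
        (∀ w, (GG.induce (f w)).Connected) ∧
        (Pairwise fun w w' => Disjoint (f w) (f w')) ∧
        (∀ w w', w ≠ w' → ∃ a ∈ f w, ∃ b ∈ f w', GG.Adj a b) ∧
        ((0:Fin 7) ∈ f 0 ∨ ∀ w, (0:Fin 7) ∉ f w) := by
    obtain ⟨f, h1, h2, h3⟩ := hm
    have h3' : ∀ w w', w ≠ w' → ∃ a ∈ f w, ∃ b ∈ f w', GG.Adj a b := fun w w' h => h3 w w' h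
    by_cases h : ∃ w, (0:Fin 7) ∈ f w
    · obtain ⟨w, hw⟩ := h
      set e := Equiv.swap (0 : Fin 5) w with he
      refine ⟨f ∘ e, fun u => h1 (e u), ?_, ?_, Or.inl ?_⟩
      · intro a b hab
        exact h2 (e.injective.ne hab)
      · intro a b hab
        exact h3' (e a) (e b) (e.injective.ne hab)
      · show (0:Fin 7) ∈ f (e 0)
        rw [he, Equiv.swap_apply_left]
        exact hw
    · exact ⟨f, h1, h2, h3', Or.inr (not_exists.mp h)⟩
  obtain ⟨label, mem_iff⟩ := exists_label f h2
  classical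
  set sw : Fin 5 → Finset (Fin 7) := fun w => Finset.univ.filter (fun v => label v = some w)
    with hsw
  have lab_sw : ∀ (v : Fin 7) (w : Fin 5), (label v = some w) ↔ v ∈ sw w := by
    intro v w; simp [hsw]
  have mem_sw : ∀ (v : Fin 7) (w : Fin 5), v ∈ sw w ↔ v ∈ f w := by
    intro v w; rw [← lab_sw, ← mem_iff]
  have hne : ∀ w, (sw w).Nonempty := by
    intro w
    obtain ⟨⟨x, hx⟩⟩ := (h1 w).nonempty
    exact ⟨x, (mem_sw x w).mpr hx⟩
  have hnb : ∀ w, ∀ v ∈ sw w, (∃ u ∈ sw w, u ≠ v) → ∃ u ∈ sw w, adjB v u = true := by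
    rintro w v hv ⟨u, hu, huv⟩
    have hv' := (mem_sw v w).mp hv
    have hu' := (mem_sw u w).mp hu
    obtain ⟨p⟩ := (h1 w).preconnected ⟨v, hv'⟩ ⟨u, hu'⟩
    by_cases hl : p.length = 0
    · have h0 := SimpleGraph.Walk.eq_of_length_eq_zero hl
      exact absurd (congrArg Subtype.val h0).symm huv
    · have hadj := p.adj_getVert_succ (i := 0) (by omega)
      rw [SimpleGraph.Walk.getVert_zero] at hadj
      have hGadj : GG.Adj v ((p.getVert 1) : Fin 7) := hadj
      exact ⟨(p.getVert 1 : Fin 7), (mem_sw _ w).mpr (p.getVert 1).2, (adjB_iff _ _).mp hGadj⟩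
  have hct : ∀ w, ct (enc (sw w)) = true := fun w => ct_of (sw w) (hne w) (hnb w)
  have hpr : ∀ w w' : Fin 5, w ≠ w' → pr (enc (sw w)) (enc (sw w')) = true := by
    intro w w' hww
    obtain ⟨a, ha, b, hb, hab⟩ := h3 w w' hww
    exact pr_of _ _ ((mem_sw a w).mpr ha) ((mem_sw b w').mpr hb) ((adjB_iff a b).mp hab)
  have h7 : srch5 7 (Mk (sw 0) 7) (Mk (sw 1) 7) (Mk (sw 2) 7) (Mk (sw 3) 7) (Mk (sw 4) 7)
      = true := by
    simp only [Mk7]; exact big5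
  have h6 : srch5 6 (Mk (sw 0) 6) (Mk (sw 1) 6) (Mk (sw 2) 6) (Mk (sw 3) 6) (Mk (sw 4) 6)
      = true := by
    have hstep := step5 5 _ _ _ _ _ h7 (label 6)
    rw [maskStep' (sw 0) 6 6 rfl _ (lab_sw 6 0), maskStep' (sw 1) 6 6 rfl _ (lab_sw 6 1),
        maskStep' (sw 2) 6 6 rfl _ (lab_sw 6 2), maskStep' (sw 3) 6 6 rfl _ (lab_sw 6 3),
        maskStep' (sw 4) 6 6 rfl _ (lab_sw 6 4)] at hstep
    exact hstep
  have h5 : srch5 5 (Mk (sw 0) 5) (Mk (sw 1) 5) (Mk (sw 2) 5) (Mk (sw 3) 5) (Mk (sw 4) 5)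
      = true := by
    have hstep := step5 4 _ _ _ _ _ h6 (label 5)
    rw [maskStep' (sw 0) 5 5 rfl _ (lab_sw 5 0), maskStep' (sw 1) 5 5 rfl _ (lab_sw 5 1),
        maskStep' (sw 2) 5 5 rfl _ (lab_sw 5 2), maskStep' (sw 3) 5 5 rfl _ (lab_sw 5 3),
        maskStep' (sw 4) 5 5 rfl _ (lab_sw 5 4)] at hstep
    exact hstep
  have h4 : srch5 4 (Mk (sw 0) 4) (Mk (sw 1) 4) (Mk (sw 2) 4) (Mk (sw 3) 4) (Mk (sw 4) 4)
      = true := by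
    have hstep := step5 3 _ _ _ _ _ h5 (label 4)
    rw [maskStep' (sw 0) 4 4 rfl _ (lab_sw 4 0), maskStep' (sw 1) 4 4 rfl _ (lab_sw 4 1),
        maskStep' (sw 2) 4 4 rfl _ (lab_sw 4 2), maskStep' (sw 3) 4 4 rfl _ (lab_sw 4 3),
        maskStep' (sw 4) 4 4 rfl _ (lab_sw 4 4)] at hstep
    exact hstep
  have h3w : srch5 3 (Mk (sw 0) 3) (Mk (sw 1) 3) (Mk (sw 2) 3) (Mk (sw 3) 3) (Mk (sw 4) 3)
      = true := by
    have hstep := step5 2 _ _ _ _ _ h4 (label 3)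
    rw [maskStep' (sw 0) 3 3 rfl _ (lab_sw 3 0), maskStep' (sw 1) 3 3 rfl _ (lab_sw 3 1),
        maskStep' (sw 2) 3 3 rfl _ (lab_sw 3 2), maskStep' (sw 3) 3 3 rfl _ (lab_sw 3 3),
        maskStep' (sw 4) 3 3 rfl _ (lab_sw 3 4)] at hstep
    exact hstep
  have h2w : srch5 2 (Mk (sw 0) 2) (Mk (sw 1) 2) (Mk (sw 2) 2) (Mk (sw 3) 2) (Mk (sw 4) 2)
      = true := by
    have hstep := step5 1 _ _ _ _ _ h3w (label 2)
    rw [maskStep' (sw 0) 2 2 rfl _ (lab_sw 2 0), maskStep' (sw 1) 2 2 rfl _ (lab_sw 2 1),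
        maskStep' (sw 2) 2 2 rfl _ (lab_sw 2 2), maskStep' (sw 3) 2 2 rfl _ (lab_sw 2 3),
        maskStep' (sw 4) 2 2 rfl _ (lab_sw 2 4)] at hstep
    exact hstep
  have h1w : srch5 1 (Mk (sw 0) 1) (Mk (sw 1) 1) (Mk (sw 2) 1) (Mk (sw 3) 1) (Mk (sw 4) 1)
      = true := by
    have hstep := step5 0 _ _ _ _ _ h2w (label 1)
    rw [maskStep' (sw 0) 1 1 rfl _ (lab_sw 1 0), maskStep' (sw 1) 1 1 rfl _ (lab_sw 1 1),
        maskStep' (sw 2) 1 1 rfl _ (lab_sw 1 2), maskStep' (sw 3) 1 1 rfl _ (lab_sw 1 3),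
        maskStep' (sw 4) 1 1 rfl _ (lab_sw 1 4)] at hstep
    exact hstep
  have hlast : label 0 = none ∨ label 0 = some 0 := by
    rcases hnorm with h0 | h0
    · exact Or.inr ((mem_iff 0 0).mp h0)
    · rcases hl : label 0 with _ | w
      · exact Or.inl rfl
      · exact absurd ((mem_iff 0 w).mpr hl) (h0 w)
  have h0w : srch5 0 (Mk (sw 0) 0) (Mk (sw 1) 0) (Mk (sw 2) 0) (Mk (sw 3) 0) (Mk (sw 4) 0)
      = true := by
    have hstep := step5b _ _ _ _ _ h1w (label 0) hlast
    rw [maskStep' (sw 0) 0 0 rfl _ (lab_sw 0 0), maskStep' (sw 1) 0 0 rfl _ (lab_sw 0 1),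
        maskStep' (sw 2) 0 0 rfl _ (lab_sw 0 2), maskStep' (sw 3) 0 0 rfl _ (lab_sw 0 3),
        maskStep' (sw 4) 0 0 rfl _ (lab_sw 0 4)] at hstep
    exact hstep
  rw [Mk0, Mk0, Mk0, Mk0, Mk0] at h0w
  have hchk : chk5 (enc (sw 0)) (enc (sw 1)) (enc (sw 2)) (enc (sw 3)) (enc (sw 4)) = true := by
    unfold chk5
    simp only [Bool.and_eq_true]
    exact ⟨hct 0, hct 1, hpr 0 1 (by decide), hct 2, hpr 0 2 (by decide), hpr 1 2 (by decide),
      hct 3, hpr 0 3 (by decide), hpr 1 3 (by decide), hpr 2 3 (by decide),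
      hct 4, hpr 0 4 (by decide), hpr 1 4 (by decide), hpr 2 4 (by decide), hpr 3 4 (by decide)⟩
  simp [srch5, hchk] at h0w


abbrev H33 := completeBipartiteGraph (Fin 3) (Fin 3)

lemma H33_adj_inl_inr (i j : Fin 3) : H33.Adj (Sum.inl i) (Sum.inr j) := by
  simp [completeBipartiteGraph]

lemma H33_perm_comm : ∀ a b, H33.Adj a b →
    H33.Adj (Equiv.sumComm (Fin 3) (Fin 3) a) (Equiv.sumComm (Fin 3) (Fin 3) b) := by
  rintro (a | a) (b | b) h <;> simp_all [completeBipartiteGraph]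

lemma H33_perm_congr (e : Fin 3 ≃ Fin 3) : ∀ a b, H33.Adj a b →
    H33.Adj (Equiv.sumCongr e (Equiv.refl (Fin 3)) a)
      (Equiv.sumCongr e (Equiv.refl (Fin 3)) b) := by
  rintro (a | a) (b | b) h <;> simp_all [completeBipartiteGraph]

theorem noK33 : ¬ MinorOf H33 GG := by
  intro hm
  obtain ⟨f, h1, h2, h3, hnorm⟩ :
      ∃ f : Fin 3 ⊕ Fin 3 → Set (Fin 7),
        (∀ w, (GG.induce (f w)).Connected) ∧
        (Pairwise fun w w' => Disjoint (f w) (f w')) ∧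
        (∀ w w', H33.Adj w w' → ∃ a ∈ f w, ∃ b ∈ f w', GG.Adj a b) ∧
        ((0:Fin 7) ∈ f (Sum.inl 0) ∨ ∀ w, (0:Fin 7) ∉ f w) := by
    obtain ⟨f, h1, h2, h3⟩ := hm
    by_cases h : ∃ w, (0:Fin 7) ∈ f w
    · obtain ⟨w, hw⟩ := h
      have key : ∀ (σ : Fin 3 ⊕ Fin 3 ≃ Fin 3 ⊕ Fin 3),
          (∀ a b, H33.Adj a b → H33.Adj (σ a) (σ b)) → σ (Sum.inl 0) = w →
          ∃ f : Fin 3 ⊕ Fin 3 → Set (Fin 7),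
            (∀ w, (GG.induce (f w)).Connected) ∧
            (Pairwise fun w w' => Disjoint (f w) (f w')) ∧
            (∀ w w', H33.Adj w w' → ∃ a ∈ f w, ∃ b ∈ f w', GG.Adj a b) ∧
            ((0:Fin 7) ∈ f (Sum.inl 0) ∨ ∀ w, (0:Fin 7) ∉ f w) := by
        intro σ hσ hσ0
        refine ⟨f ∘ σ, fun u => h1 (σ u), ?_, ?_, Or.inl ?_⟩
        · intro a b hab
          exact h2 (σ.injective.ne hab)
        · intro a b hab
          exact h3 (σ a) (σ b) (hσ a b hab)
        · show (0:Fin 7) ∈ f (σ (Sum.inl 0))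
          rw [hσ0]; exact hw
      rcases w with i | j
      · exact key (Equiv.sumCongr (Equiv.swap 0 i) (Equiv.refl (Fin 3)))
          (H33_perm_congr _) (by simp [Equiv.swap_apply_left])
      · exact key ((Equiv.sumCongr (Equiv.swap 0 j) (Equiv.refl (Fin 3))).trans
            (Equiv.sumComm (Fin 3) (Fin 3)))
          (fun a b hab => H33_perm_comm _ _ (H33_perm_congr _ a b hab))
          (by simp [Equiv.swap_apply_left])
    · exact ⟨f, h1, h2, h3, Or.inr (not_exists.mp h)⟩
  obtain ⟨label, mem_iff⟩ := exists_label f h2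
  classical
  set sw : Fin 3 ⊕ Fin 3 → Finset (Fin 7) :=
    fun w => Finset.univ.filter (fun v => label v = some w) with hsw
  have lab_sw : ∀ (v : Fin 7) (w : Fin 3 ⊕ Fin 3), (label v = some w) ↔ v ∈ sw w := by
    intro v w; simp [hsw]
  have mem_sw : ∀ (v : Fin 7) (w : Fin 3 ⊕ Fin 3), v ∈ sw w ↔ v ∈ f w := by
    intro v w; rw [← lab_sw, ← mem_iff]
  have hne : ∀ w, (sw w).Nonempty := by
    intro w
    obtain ⟨⟨x, hx⟩⟩ := (h1 w).nonempty
    exact ⟨x, (mem_sw x w).mpr hx⟩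
  have hnb : ∀ w, ∀ v ∈ sw w, (∃ u ∈ sw w, u ≠ v) → ∃ u ∈ sw w, adjB v u = true := by
    rintro w v hv ⟨u, hu, huv⟩
    have hv' := (mem_sw v w).mp hv
    have hu' := (mem_sw u w).mp hu
    obtain ⟨p⟩ := (h1 w).preconnected ⟨v, hv'⟩ ⟨u, hu'⟩
    by_cases hl : p.length = 0
    · have h0 := SimpleGraph.Walk.eq_of_length_eq_zero hl
      exact absurd (congrArg Subtype.val h0).symm huv
    · have hadj := p.adj_getVert_succ (i := 0) (by omega)
      rw [SimpleGraph.Walk.getVert_zero] at hadj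
      have hGadj : GG.Adj v ((p.getVert 1) : Fin 7) := hadj
      exact ⟨(p.getVert 1 : Fin 7), (mem_sw _ w).mpr (p.getVert 1).2, (adjB_iff _ _).mp hGadj⟩
  have hct : ∀ w, ct (enc (sw w)) = true := fun w => ct_of (sw w) (hne w) (hnb w)
  have hpr : ∀ i j : Fin 3, pr (enc (sw (Sum.inl i))) (enc (sw (Sum.inr j))) = true := by
    intro i j
    obtain ⟨a, ha, b, hb, hab⟩ := h3 (Sum.inl i) (Sum.inr j) (H33_adj_inl_inr i j)
    exact pr_of _ _ ((mem_sw a _).mpr ha) ((mem_sw b _).mpr hb) ((adjB_iff a b).mp hab)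
  have h7 : srch6 7 (Mk (sw (.inl 0)) 7) (Mk (sw (.inl 1)) 7) (Mk (sw (.inl 2)) 7)
      (Mk (sw (.inr 0)) 7) (Mk (sw (.inr 1)) 7) (Mk (sw (.inr 2)) 7) = true := by
    simp only [Mk7]; exact big6
  have h6 : srch6 6 (Mk (sw (.inl 0)) 6) (Mk (sw (.inl 1)) 6) (Mk (sw (.inl 2)) 6)
      (Mk (sw (.inr 0)) 6) (Mk (sw (.inr 1)) 6) (Mk (sw (.inr 2)) 6) = true := by
    have hstep := step6 5 _ _ _ _ _ _ h7 (label 6)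
    rw [maskStep' _ 6 6 rfl _ (lab_sw 6 (.inl 0)), maskStep' _ 6 6 rfl _ (lab_sw 6 (.inl 1)),
        maskStep' _ 6 6 rfl _ (lab_sw 6 (.inl 2)), maskStep' _ 6 6 rfl _ (lab_sw 6 (.inr 0)),
        maskStep' _ 6 6 rfl _ (lab_sw 6 (.inr 1)), maskStep' _ 6 6 rfl _ (lab_sw 6 (.inr 2))]
      at hstep
    exact hstep
  have h5 : srch6 5 (Mk (sw (.inl 0)) 5) (Mk (sw (.inl 1)) 5) (Mk (sw (.inl 2)) 5)
      (Mk (sw (.inr 0)) 5) (Mk (sw (.inr 1)) 5) (Mk (sw (.inr 2)) 5) = true := by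
    have hstep := step6 4 _ _ _ _ _ _ h6 (label 5)
    rw [maskStep' _ 5 5 rfl _ (lab_sw 5 (.inl 0)), maskStep' _ 5 5 rfl _ (lab_sw 5 (.inl 1)),
        maskStep' _ 5 5 rfl _ (lab_sw 5 (.inl 2)), maskStep' _ 5 5 rfl _ (lab_sw 5 (.inr 0)),
        maskStep' _ 5 5 rfl _ (lab_sw 5 (.inr 1)), maskStep' _ 5 5 rfl _ (lab_sw 5 (.inr 2))]
      at hstep
    exact hstep
  have h4 : srch6 4 (Mk (sw (.inl 0)) 4) (Mk (sw (.inl 1)) 4) (Mk (sw (.inl 2)) 4)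
      (Mk (sw (.inr 0)) 4) (Mk (sw (.inr 1)) 4) (Mk (sw (.inr 2)) 4) = true := by
    have hstep := step6 3 _ _ _ _ _ _ h5 (label 4)
    rw [maskStep' _ 4 4 rfl _ (lab_sw 4 (.inl 0)), maskStep' _ 4 4 rfl _ (lab_sw 4 (.inl 1)),
        maskStep' _ 4 4 rfl _ (lab_sw 4 (.inl 2)), maskStep' _ 4 4 rfl _ (lab_sw 4 (.inr 0)),
        maskStep' _ 4 4 rfl _ (lab_sw 4 (.inr 1)), maskStep' _ 4 4 rfl _ (lab_sw 4 (.inr 2))]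
      at hstep
    exact hstep
  have h3w : srch6 3 (Mk (sw (.inl 0)) 3) (Mk (sw (.inl 1)) 3) (Mk (sw (.inl 2)) 3)
      (Mk (sw (.inr 0)) 3) (Mk (sw (.inr 1)) 3) (Mk (sw (.inr 2)) 3) = true := by
    have hstep := step6 2 _ _ _ _ _ _ h4 (label 3)
    rw [maskStep' _ 3 3 rfl _ (lab_sw 3 (.inl 0)), maskStep' _ 3 3 rfl _ (lab_sw 3 (.inl 1)),
        maskStep' _ 3 3 rfl _ (lab_sw 3 (.inl 2)), maskStep' _ 3 3 rfl _ (lab_sw 3 (.inr 0)),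
        maskStep' _ 3 3 rfl _ (lab_sw 3 (.inr 1)), maskStep' _ 3 3 rfl _ (lab_sw 3 (.inr 2))]
      at hstep
    exact hstep
  have h2w : srch6 2 (Mk (sw (.inl 0)) 2) (Mk (sw (.inl 1)) 2) (Mk (sw (.inl 2)) 2)
      (Mk (sw (.inr 0)) 2) (Mk (sw (.inr 1)) 2) (Mk (sw (.inr 2)) 2) = true := by
    have hstep := step6 1 _ _ _ _ _ _ h3w (label 2)
    rw [maskStep' _ 2 2 rfl _ (lab_sw 2 (.inl 0)), maskStep' _ 2 2 rfl _ (lab_sw 2 (.inl 1)),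
        maskStep' _ 2 2 rfl _ (lab_sw 2 (.inl 2)), maskStep' _ 2 2 rfl _ (lab_sw 2 (.inr 0)),
        maskStep' _ 2 2 rfl _ (lab_sw 2 (.inr 1)), maskStep' _ 2 2 rfl _ (lab_sw 2 (.inr 2))]
      at hstep
    exact hstep
  have h1w : srch6 1 (Mk (sw (.inl 0)) 1) (Mk (sw (.inl 1)) 1) (Mk (sw (.inl 2)) 1)
      (Mk (sw (.inr 0)) 1) (Mk (sw (.inr 1)) 1) (Mk (sw (.inr 2)) 1) = true := by
    have hstep := step6 0 _ _ _ _ _ _ h2w (label 1)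
    rw [maskStep' _ 1 1 rfl _ (lab_sw 1 (.inl 0)), maskStep' _ 1 1 rfl _ (lab_sw 1 (.inl 1)),
        maskStep' _ 1 1 rfl _ (lab_sw 1 (.inl 2)), maskStep' _ 1 1 rfl _ (lab_sw 1 (.inr 0)),
        maskStep' _ 1 1 rfl _ (lab_sw 1 (.inr 1)), maskStep' _ 1 1 rfl _ (lab_sw 1 (.inr 2))]
      at hstep
    exact hstep
  have hlast : label 0 = none ∨ label 0 = some (Sum.inl 0) := by
    rcases hnorm with h0 | h0
    · exact Or.inr ((mem_iff 0 (Sum.inl 0)).mp h0)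
    · rcases hl : label 0 with _ | w
      · exact Or.inl rfl
      · exact absurd ((mem_iff 0 w).mpr hl) (h0 w)
  have h0w : srch6 0 (Mk (sw (.inl 0)) 0) (Mk (sw (.inl 1)) 0) (Mk (sw (.inl 2)) 0)
      (Mk (sw (.inr 0)) 0) (Mk (sw (.inr 1)) 0) (Mk (sw (.inr 2)) 0) = true := by
    have hstep := step6b _ _ _ _ _ _ h1w (label 0) hlast
    rw [maskStep' _ 0 0 rfl _ (lab_sw 0 (.inl 0)), maskStep' _ 0 0 rfl _ (lab_sw 0 (.inl 1)),
        maskStep' _ 0 0 rfl _ (lab_sw 0 (.inl 2)), maskStep' _ 0 0 rfl _ (lab_sw 0 (.inr 0)),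
        maskStep' _ 0 0 rfl _ (lab_sw 0 (.inr 1)), maskStep' _ 0 0 rfl _ (lab_sw 0 (.inr 2))]
      at hstep
    exact hstep
  rw [Mk0, Mk0, Mk0, Mk0, Mk0, Mk0] at h0w
  have hchk : chk6 (enc (sw (.inl 0))) (enc (sw (.inl 1))) (enc (sw (.inl 2)))
      (enc (sw (.inr 0))) (enc (sw (.inr 1))) (enc (sw (.inr 2))) = true := by
    unfold chk6
    simp only [Bool.and_eq_true]
    exact ⟨hct _, hct _, hct _, hct _, hpr 0 0, hpr 1 0, hpr 2 0,
      hct _, hpr 0 1, hpr 1 1, hpr 2 1, hct _, hpr 0 2, hpr 1 2, hpr 2 2⟩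
  simp [srch6, hchk] at h0w

end Bridge

end K331Planar

/-- `K_{3,3,1}` (parts `{0}`, `{1,2,3}`, `{4,5,6}`) minus two nonadjacent edges between
the two parts of size 3 — here `(a,x) = (1,4)` and `(b,y) = (2,5)` — is planar. -/
theorem K331_minus_two_nonadjacent_edges_planar :
    IsPlanar (K331.deleteEdges {s((1 : Fin 7), 4), s(2, 5)}) :=
  ⟨K331Planar.noK5, K331Planar.noK33⟩
end
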